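/- The map x ↦ (sum of the K largest absolute entries of x) defines a norm on R^n, for any fixed K ∈ {1,...,n}. -/

import Mathlib

/-- The K-norm of x ∈ R^n: the sum of the K largest values among |x_1|, ..., |x_n|,
expressed as the maximum over all coordinate subsets of size K of the sum of |x_i|. -/
noncomputable def kNorm (n K : ℕ) (x : Fin n → ℝ) : ℝ :=
  sSup {s : ℝ | ∃ S : Finset (Fin n), S.card = K ∧ s = ∑ i ∈ S, |x i|}

lemma kSet_finite (n K : ℕ) (x : Fin n → ℝ) :
    {s : ℝ | ∃ S : Finset (Fin n), S.card = K ∧ s = ∑ i ∈ S, |x i|}.Finite := by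
  apply Set.Finite.subset (Set.finite_range (fun S : Finset (Fin n) => ∑ i ∈ S, |x i|))
  rintro s ⟨S, _, rfl⟩
  exact ⟨S, rfl⟩

lemma kSet_nonempty {n K : ℕ} (hKn : K ≤ n) (x : Fin n → ℝ) :
    {s : ℝ | ∃ S : Finset (Fin n), S.card = K ∧ s = ∑ i ∈ S, |x i|}.Nonempty := by
  obtain ⟨S, _, hcard⟩ := Finset.exists_subset_card_eq (s := (Finset.univ : Finset (Fin n))) (n := K)
    (by simpa using hKn)
  exact ⟨∑ i ∈ S, |x i|, S, hcard, rfl⟩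

lemma sum_le_kNorm {n K : ℕ} (x : Fin n → ℝ) {S : Finset (Fin n)} (hS : S.card = K) :
    ∑ i ∈ S, |x i| ≤ kNorm n K x :=
  le_csSup (kSet_finite n K x).bddAbove ⟨S, hS, rfl⟩

lemma kNorm_mem {n K : ℕ} (hKn : K ≤ n) (x : Fin n → ℝ) :
    ∃ S : Finset (Fin n), S.card = K ∧ kNorm n K x = ∑ i ∈ S, |x i| :=
  (kSet_nonempty hKn x).csSup_mem (kSet_finite n K x)

theorem kNorm_is_norm {n K : ℕ} (hK1 : 1 ≤ K) (hKn : K ≤ n) :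
    (∀ x : Fin n → ℝ, 0 ≤ kNorm n K x) ∧
    (∀ x : Fin n → ℝ, kNorm n K x = 0 ↔ x = 0) ∧
    (∀ (a : ℝ) (x : Fin n → ℝ), kNorm n K (a • x) = |a| * kNorm n K x) ∧
    (∀ x y : Fin n → ℝ, kNorm n K (x + y) ≤ kNorm n K x + kNorm n K y) := by
  have nonneg : ∀ x : Fin n → ℝ, 0 ≤ kNorm n K x := by
    intro x
    obtain ⟨S, _, hcard⟩ := Finset.exists_subset_card_eq (s := (Finset.univ : Finset (Fin n))) (n := K)
      (by simpa using hKn)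
    exact le_trans (Finset.sum_nonneg fun i _ => abs_nonneg _) (sum_le_kNorm x hcard)
  refine ⟨nonneg, ?_, ?_, ?_⟩
  · intro x
    constructor
    · intro h
      by_contra hx
      obtain ⟨i, hi⟩ := Function.ne_iff.mp hx
      have hxi : 0 < |x i| := abs_pos.mpr (by simpa using hi)
      obtain ⟨S, hsub, _, hcard⟩ := Finset.exists_subsuperset_card_eq
        (Finset.subset_univ ({i} : Finset (Fin n))) (by simpa using hK1)
        (by simpa using hKn)
      have h1 : |x i| ≤ ∑ j ∈ S, |x j| := by
        apply Finset.single_le_sum (fun j _ => abs_nonneg (x j))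
        exact hsub (Finset.mem_singleton_self i)
      have := le_trans h1 (sum_le_kNorm x hcard)
      linarith [h ▸ this]
    · intro h
      subst h
      obtain ⟨S, _, hrep⟩ := kNorm_mem hKn (0 : Fin n → ℝ)
      simp_all
  · intro a x
    apply le_antisymm
    · obtain ⟨S, hcard, hrep⟩ := kNorm_mem hKn (a • x)
      rw [hrep]
      have : ∑ i ∈ S, |(a • x) i| = |a| * ∑ i ∈ S, |x i| := by
        rw [Finset.mul_sum]
        exact Finset.sum_congr rfl fun i _ => by simp [abs_mul]
      rw [this]
      exact mul_le_mul_of_nonneg_left (sum_le_kNorm x hcard) (abs_nonneg a)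
    · obtain ⟨S, hcard, hrep⟩ := kNorm_mem hKn x
      rw [hrep]
      have : |a| * ∑ i ∈ S, |x i| = ∑ i ∈ S, |(a • x) i| := by
        rw [Finset.mul_sum]
        exact Finset.sum_congr rfl fun i _ => by simp [abs_mul]
      rw [this]
      exact sum_le_kNorm (a • x) hcard
  · intro x y
    obtain ⟨S, hcard, hrep⟩ := kNorm_mem hKn (x + y)
    rw [hrep]
    calc ∑ i ∈ S, |(x + y) i| ≤ ∑ i ∈ S, (|x i| + |y i|) :=
          Finset.sum_le_sum fun i _ => abs_add_le _ _
      _ = (∑ i ∈ S, |x i|) + ∑ i ∈ S, |y i| := Finset.sum_add_distrib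
      _ ≤ kNorm n K x + kNorm n K y :=
          add_le_add (sum_le_kNorm x hcard) (sum_le_kNorm y hcard)
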